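/- Let Θ be an m×n matrix, let T ⊂ {1,…,n} with |T| = k, and suppose there is a (δ/14)-net W of the unit ball of the coordinate subspace ℝ^T such that (1 − δ/√2)‖w‖² ≤ ‖Θw‖² ≤ (1 + δ/√2)‖w‖² for all w ∈ W. Then (1−δ)‖s‖² ≤ ‖Θs‖² ≤ (1+δ)‖s‖² for all s supported on T. -/

import Mathlib

open Matrix

private lemma stmt7_sq_le {x y : ℝ} (hx : 0 ≤ x) (hy : 0 ≤ y) (h : x ^ 2 ≤ y ^ 2) : x ≤ y := by
  nlinarith

set_option maxHeartbeats 1000000 in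
/-- net-extension step. If `W` is a `(δ/14)`-net of the unit ball of the
coordinate subspace `ℝ^T` (`|T| = k`) and `(1 − δ/√2)‖w‖² ≤ ‖Θw‖² ≤ (1 + δ/√2)‖w‖²` for
all `w ∈ W`, then `(1−δ)‖s‖² ≤ ‖Θs‖² ≤ (1+δ)‖s‖²` for all `s` supported on `T`. -/
theorem stmt7 {m n k : ℕ} (δ : ℝ) (hδ : δ ∈ Set.Ioo (0 : ℝ) 1)
    (Θ : Matrix (Fin m) (Fin n) ℝ)
    (T : Finset (Fin n)) (hT : T.card = k)
    (W : Finset (Fin n → ℝ))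
    (hWball : ∀ w ∈ W, (∀ i ∉ T, w i = 0) ∧ (∑ i, w i ^ 2) ≤ 1)
    (hWnet : ∀ s : Fin n → ℝ, (∀ i ∉ T, s i = 0) → (∑ i, s i ^ 2) = 1 →
      ∃ w ∈ W, Real.sqrt (∑ i, (s i - w i) ^ 2) ≤ δ / 14)
    (hWbound : ∀ w ∈ W,
      (1 - δ / Real.sqrt 2) * (∑ i, w i ^ 2) ≤ (∑ i, (Θ *ᵥ w) i ^ 2) ∧
      (∑ i, (Θ *ᵥ w) i ^ 2) ≤ (1 + δ / Real.sqrt 2) * (∑ i, w i ^ 2)) :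
    ∀ s : Fin n → ℝ, (∀ i ∉ T, s i = 0) →
      (1 - δ) * (∑ i, s i ^ 2) ≤ (∑ i, (Θ *ᵥ s) i ^ 2) ∧
      (∑ i, (Θ *ᵥ s) i ^ 2) ≤ (1 + δ) * (∑ i, s i ^ 2) := by
  obtain ⟨hδ0, hδ1⟩ := hδ
  classical
  -- numeric setup
  set r : ℝ := Real.sqrt 2 with hrdef
  have hr2 : r ^ 2 = 2 := Real.sq_sqrt (by norm_num)
  have hr0 : 0 < r := Real.sqrt_pos.mpr (by norm_num)
  have hrl : 1.414 ≤ r := by nlinarith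
  have hru : r ≤ 1.415 := by nlinarith
  have hδr : δ / r = δ * r / 2 := by
    field_simp
    nlinarith
  have hδru : δ * r ≤ 1.415 := by
    calc δ * r ≤ 1 * r := mul_le_mul_of_nonneg_right hδ1.le hr0.le
      _ = r := one_mul _
      _ ≤ 1.415 := hru
  set ε : ℝ := δ / 14 with hεdef
  have hε0 : 0 < ε := by positivity
  have hε1 : ε < 1 := by rw [hεdef]; linarith
  set a : ℝ := Real.sqrt (1 - δ / r) with hadef
  set b : ℝ := Real.sqrt (1 + δ / r) with hbdef
  set c : ℝ := Real.sqrt (1 - δ) with hcdef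
  set d : ℝ := Real.sqrt (1 + δ) with hddef
  have hδr_lt : δ / r < 1 := by rw [hδr]; linarith
  have ha2 : a ^ 2 = 1 - δ / r := Real.sq_sqrt (by linarith)
  have hb2 : b ^ 2 = 1 + δ / r := Real.sq_sqrt (by positivity)
  have hc2 : c ^ 2 = 1 - δ := Real.sq_sqrt (by linarith)
  have hd2 : d ^ 2 = 1 + δ := Real.sq_sqrt (by linarith)
  have ha0 : 0 ≤ a := Real.sqrt_nonneg _
  have hb0 : 0 ≤ b := Real.sqrt_nonneg _
  have hc0 : 0 ≤ c := Real.sqrt_nonneg _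
  have hcpos : 0 < c := Real.sqrt_pos.mpr (by linarith)
  have hd0 : 0 ≤ d := Real.sqrt_nonneg _
  have ha2' : a ^ 2 = 1 - δ * r / 2 := by rw [ha2, hδr]
  have hb2' : b ^ 2 = 1 + δ * r / 2 := by rw [hb2, hδr]
  -- numeric inequality N1 : b ≤ d * (1 - ε)
  have hN1 : b ≤ d * (1 - ε) := by
    apply stmt7_sq_le hb0 (mul_nonneg hd0 (by linarith))
    rw [mul_pow, hd2, hb2', hεdef]
    have h4 : 98 * r ≤ 168 - 27 * δ + δ ^ 2 := by nlinarith [sq_nonneg δ]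
    have h5 : δ * (98 * r) ≤ δ * (168 - 27 * δ + δ ^ 2) :=
      mul_le_mul_of_nonneg_left h4 hδ0.le
    nlinarith [h5]
  -- numeric inequality N2 : c ≤ a * (1 - ε) - d * ε
  have hau : a ≤ 1 - δ * r / 4 := by
    apply stmt7_sq_le ha0 (by linarith)
    rw [ha2']; nlinarith [sq_nonneg (δ * r)]
  have hcu : c ≤ 1 - δ / 2 := by
    apply stmt7_sq_le hc0 (by linarith)
    rw [hc2]; nlinarith
  have hdu : d ≤ 1 + δ / 2 := by
    apply stmt7_sq_le hd0 (by linarith)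
    rw [hd2]; nlinarith
  have h7 : (a + d) * (a + c) ≤ 7 * (2 - r) := by
    have h1 : a + d ≤ 2 - δ * r / 4 + δ / 2 := by linarith
    have h2 : a + c ≤ 2 - δ * r / 4 - δ / 2 := by linarith
    have h3 : (a + d) * (a + c) ≤ (2 - δ * r / 4 + δ / 2) * (2 - δ * r / 4 - δ / 2) :=
      mul_le_mul h1 h2 (by linarith) (by linarith)
    nlinarith [mul_pos hδ0 hr0, sq_nonneg δ, mul_le_mul_of_nonneg_left hδru hδ0.le]
  have hkey : (a - c) * (a + c) = ε * (7 * (2 - r)) := by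
    have h8 : (a - c) * (a + c) = a ^ 2 - c ^ 2 := by ring
    rw [h8, ha2', hc2, hεdef]; ring
  have hnum2 : ε * (a + d) ≤ a - c := by
    have hacpos : 0 < a + c := by linarith
    have h4 : (ε * (a + d)) * (a + c) ≤ (a - c) * (a + c) := by
      rw [hkey]
      calc (ε * (a + d)) * (a + c) = ε * ((a + d) * (a + c)) := by ring
        _ ≤ ε * (7 * (2 - r)) := mul_le_mul_of_nonneg_left h7 hε0.le
    exact le_of_mul_le_mul_right h4 hacpos
  have hN2 : c ≤ a * (1 - ε) - d * ε := by
    have h9 : ε * (a + d) = a * ε + d * ε := by ring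
    have h10 : a * (1 - ε) = a - a * ε := by ring
    linarith [hnum2]
  -- Euclidean space machinery (opaque)
  have hsum_nonneg : ∀ (v : Fin n → ℝ), (0:ℝ) ≤ ∑ i, v i ^ 2 :=
    fun v => Finset.sum_nonneg fun i _ => sq_nonneg _
  have hsum_nonneg' : ∀ (v : Fin m → ℝ), (0:ℝ) ≤ ∑ i, v i ^ 2 :=
    fun v => Finset.sum_nonneg fun i _ => sq_nonneg _
  obtain ⟨eL, L, henorm, hLnorm⟩ :
      ∃ (eL : (Fin n → ℝ) ≃ₗ[ℝ] EuclideanSpace ℝ (Fin n))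
        (L : EuclideanSpace ℝ (Fin n) →L[ℝ] EuclideanSpace ℝ (Fin m)),
        (∀ v : Fin n → ℝ, ‖eL v‖ = Real.sqrt (∑ i, v i ^ 2)) ∧
        (∀ v : Fin n → ℝ, ‖L (eL v)‖ = Real.sqrt (∑ i, (Θ *ᵥ v) i ^ 2)) := by
    refine ⟨(WithLp.linearEquiv 2 ℝ (Fin n → ℝ)).symm,
      LinearMap.toContinuousLinearMap
        (((WithLp.linearEquiv 2 ℝ (Fin m → ℝ)).symm.toLinearMap.comp Θ.mulVecLin).comp
          (WithLp.linearEquiv 2 ℝ (Fin n → ℝ)).toLinearMap),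
      fun v => ?_, fun v => ?_⟩
    · simp [EuclideanSpace.norm_eq, Real.norm_eq_abs, sq_abs]
    · have h9 : (LinearMap.toContinuousLinearMap
          (((WithLp.linearEquiv 2 ℝ (Fin m → ℝ)).symm.toLinearMap.comp Θ.mulVecLin).comp
            (WithLp.linearEquiv 2 ℝ (Fin n → ℝ)).toLinearMap))
          ((WithLp.linearEquiv 2 ℝ (Fin n → ℝ)).symm v)
          = (WithLp.linearEquiv 2 ℝ (Fin m → ℝ)).symm (Θ *ᵥ v) := by
        simp
      rw [h9]
      simp [EuclideanSpace.norm_eq, Real.norm_eq_abs, sq_abs]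
  have hLsq : ∀ v : Fin n → ℝ, ‖L (eL v)‖ ^ 2 = ∑ i, (Θ *ᵥ v) i ^ 2 := by
    intro v
    rw [hLnorm, Real.sq_sqrt (hsum_nonneg' _)]
  have hesq : ∀ v : Fin n → ℝ, ‖eL v‖ ^ 2 = ∑ i, v i ^ 2 := by
    intro v
    rw [henorm, Real.sq_sqrt (hsum_nonneg _)]
  -- the sup
  set S : Set ℝ := (fun s => ‖L (eL s)‖) '' {s | (∀ i ∉ T, s i = 0) ∧ ∑ i, s i ^ 2 ≤ 1}
    with hSdef
  have hbdd : BddAbove S := by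
    refine ⟨‖L‖, ?_⟩
    rintro x ⟨s, ⟨hs1, hs2⟩, rfl⟩
    show ‖L (eL s)‖ ≤ ‖L‖
    have h1 : ‖L (eL s)‖ ≤ ‖L‖ * ‖eL s‖ := L.le_opNorm _
    have h2 : ‖eL s‖ ≤ 1 := by
      rw [henorm]
      exact Real.sqrt_le_one.mpr hs2
    calc ‖L (eL s)‖ ≤ ‖L‖ * ‖eL s‖ := h1
      _ ≤ ‖L‖ * 1 := mul_le_mul_of_nonneg_left h2 (norm_nonneg _)
      _ = ‖L‖ := mul_one _
  have h0S : ‖L (eL (0 : Fin n → ℝ))‖ ∈ S := ⟨0, ⟨fun i _ => rfl, by simp⟩, rfl⟩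
  set M : ℝ := sSup S with hMdef
  have hM0 : 0 ≤ M := le_trans (norm_nonneg _) (le_csSup hbdd h0S)
  have hmemS : ∀ s : Fin n → ℝ, (∀ i ∉ T, s i = 0) → (∑ i, s i ^ 2) ≤ 1 →
      ‖L (eL s)‖ ≤ M := fun s h1 h2 => le_csSup hbdd ⟨s, ⟨h1, h2⟩, rfl⟩
  -- normalization helpers
  have hnormalize : ∀ v : Fin n → ℝ, (0 < ∑ i, v i ^ 2) →
      (∑ i, ((Real.sqrt (∑ i, v i ^ 2))⁻¹ • v) i ^ 2) = 1 := by
    intro v hpos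
    have hσpos : 0 < Real.sqrt (∑ i, v i ^ 2) := Real.sqrt_pos.mpr hpos
    have hσ2 : (Real.sqrt (∑ i, v i ^ 2)) ^ 2 = ∑ i, v i ^ 2 :=
      Real.sq_sqrt (hsum_nonneg v)
    simp only [Pi.smul_apply, smul_eq_mul, mul_pow, ← Finset.mul_sum]
    rw [← hσ2]
    field_simp
    rw [Real.sqrt_sq hσpos.le]
  have hzero : ∀ v : Fin n → ℝ, (∑ i, v i ^ 2) = 0 → v = 0 := by
    intro v h0
    funext i
    have := (Finset.sum_eq_zero_iff_of_nonneg (fun i _ => sq_nonneg (v i))).mp h0 i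
      (Finset.mem_univ i)
    exact pow_eq_zero_iff (by norm_num) |>.mp this
  have hL0 : ‖L (eL (0 : Fin n → ℝ))‖ = 0 := by
    rw [map_zero, map_zero, norm_zero]
  have hsmulL : ∀ (σ : ℝ) (v : Fin n → ℝ), ‖L (eL (σ • v))‖ = |σ| * ‖L (eL v)‖ := by
    intro σ v
    rw [_root_.map_smul, _root_.map_smul, norm_smul, Real.norm_eq_abs]
  have hscale : ∀ v : Fin n → ℝ, (∀ i ∉ T, v i = 0) →
      ‖L (eL v)‖ ≤ M * Real.sqrt (∑ i, v i ^ 2) := by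
    intro v hv
    rcases eq_or_lt_of_le (hsum_nonneg v) with h0 | hpos
    · rw [hzero v h0.symm, hL0]
      simp
    · set σ : ℝ := Real.sqrt (∑ i, v i ^ 2) with hσdef
      have hσpos : 0 < σ := Real.sqrt_pos.mpr hpos
      have hu_supp : ∀ i ∉ T, (σ⁻¹ • v) i = 0 := by
        intro i hi; simp [hv i hi]
      have hmem := hmemS _ hu_supp (le_of_eq (hnormalize v hpos))
      have hveq : v = σ • (σ⁻¹ • v) := by
        rw [smul_smul, mul_inv_cancel₀ (ne_of_gt hσpos), one_smul]
      have h6 : ‖L (eL v)‖ = |σ| * ‖L (eL (σ⁻¹ • v))‖ := by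
        rw [← hsmulL σ (σ⁻¹ • v), ← hveq]
      rw [h6, abs_of_pos hσpos]
      calc σ * ‖L (eL (σ⁻¹ • v))‖ ≤ σ * M := mul_le_mul_of_nonneg_left hmem hσpos.le
        _ = M * σ := mul_comm _ _
  -- bound for elements of W
  have hWub : ∀ w ∈ W, ‖L (eL w)‖ ≤ b := by
    intro w hw
    apply stmt7_sq_le (norm_nonneg _) hb0
    rw [hLsq, hb2]
    calc (∑ i, (Θ *ᵥ w) i ^ 2) ≤ (1 + δ / r) * (∑ i, w i ^ 2) := (hWbound w hw).2
      _ ≤ (1 + δ / r) * 1 := mul_le_mul_of_nonneg_left (hWball w hw).2 (by positivity)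
      _ = 1 + δ / r := mul_one _
  -- difference bound
  have hdiff : ∀ (t w : Fin n → ℝ), (∀ i ∉ T, t i = 0) → (∀ i ∉ T, w i = 0) →
      Real.sqrt (∑ i, (t i - w i) ^ 2) ≤ ε → ‖L (eL (t - w))‖ ≤ M * ε := by
    intro t w ht hw hnet
    have hsupp : ∀ i ∉ T, (t - w) i = 0 := by
      intro i hi; simp [ht i hi, hw i hi]
    have h1 : Real.sqrt (∑ i, (t - w) i ^ 2) ≤ ε := by simpa using hnet
    calc ‖L (eL (t - w))‖ ≤ M * Real.sqrt (∑ i, (t - w) i ^ 2) := hscale _ hsupp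
      _ ≤ M * ε := mul_le_mul_of_nonneg_left h1 hM0
  -- the sup step : M ≤ b + M * ε
  have hstep : M ≤ b + M * ε := by
    apply csSup_le ⟨_, h0S⟩
    rintro x ⟨s, ⟨hs1, hs2⟩, rfl⟩
    show ‖L (eL s)‖ ≤ b + M * ε
    rcases eq_or_lt_of_le (hsum_nonneg s) with h0 | hpos
    · rw [hzero s h0.symm, hL0]
      positivity
    · set σ : ℝ := Real.sqrt (∑ i, s i ^ 2) with hσdef
      have hσpos : 0 < σ := Real.sqrt_pos.mpr hpos
      have hσ1 : σ ≤ 1 := Real.sqrt_le_one.mpr hs2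
      set t : Fin n → ℝ := σ⁻¹ • s with htdef
      have ht_supp : ∀ i ∉ T, t i = 0 := by
        intro i hi; simp [htdef, hs1 i hi]
      have ht_sum : ∑ i, t i ^ 2 = 1 := hnormalize s hpos
      obtain ⟨w, hwW, hwnet⟩ := hWnet t ht_supp ht_sum
      have hw_supp := (hWball w hwW).1
      have htri : ‖L (eL t)‖ ≤ ‖L (eL w)‖ + ‖L (eL (t - w))‖ := by
        have h5 := norm_add_le (L (eL w)) (L (eL (t - w)))
        rw [← map_add, ← map_add] at h5
        have hd5 : w + (t - w) = t := by abel
        rw [hd5] at h5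
        exact h5
      have hbnd : ‖L (eL t)‖ ≤ b + M * ε :=
        htri.trans (add_le_add (hWub w hwW) (hdiff t w ht_supp hw_supp hwnet))
      have hseq : s = σ • t := by
        rw [htdef, smul_smul, mul_inv_cancel₀ (ne_of_gt hσpos), one_smul]
      have h6 : ‖L (eL s)‖ = |σ| * ‖L (eL t)‖ := by
        rw [← hsmulL σ t, ← hseq]
      rw [h6, abs_of_pos hσpos]
      calc σ * ‖L (eL t)‖ ≤ 1 * ‖L (eL t)‖ :=
            mul_le_mul_of_nonneg_right hσ1 (norm_nonneg _)
        _ = ‖L (eL t)‖ := one_mul _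
        _ ≤ b + M * ε := hbnd
  have hMd : M ≤ d := by
    have h1 : M * (1 - ε) ≤ b := by
      have : M * (1 - ε) = M - M * ε := by ring
      linarith [hstep]
    have h2 : M * (1 - ε) ≤ d * (1 - ε) := h1.trans hN1
    have h3 : 0 < 1 - ε := by linarith
    exact le_of_mul_le_mul_right h2 h3
  -- main unit-vector lemma
  have hmain : ∀ t : Fin n → ℝ, (∀ i ∉ T, t i = 0) → (∑ i, t i ^ 2) = 1 →
      (1 - δ) ≤ (∑ i, (Θ *ᵥ t) i ^ 2) ∧ (∑ i, (Θ *ᵥ t) i ^ 2) ≤ 1 + δ := by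
    intro t ht1 ht2
    have hNt : ‖L (eL t)‖ ≤ M := hmemS t ht1 ht2.le
    constructor
    · -- lower bound
      obtain ⟨w, hwW, hwnet⟩ := hWnet t ht1 ht2
      have hw_supp := (hWball w hwW).1
      have h1 : ‖eL t‖ = 1 := by rw [henorm, ht2, Real.sqrt_one]
      have h2 : ‖eL t - eL w‖ ≤ ε := by
        rw [← map_sub, henorm]
        simpa using hwnet
      have h3 : 1 - ε ≤ ‖eL w‖ := by
        have h4 := norm_sub_norm_le (eL t) (eL w)
        rw [h1] at h4
        linarith
      have hw_sum : (1 - ε) ^ 2 ≤ ∑ i, w i ^ 2 := by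
        rw [← hesq]
        exact pow_le_pow_left₀ (by linarith) h3 2
      have hLw : a * (1 - ε) ≤ ‖L (eL w)‖ := by
        apply stmt7_sq_le (mul_nonneg ha0 (by linarith)) (norm_nonneg _)
        rw [hLsq, mul_pow, ha2]
        calc (1 - δ / r) * (1 - ε) ^ 2 ≤ (1 - δ / r) * (∑ i, w i ^ 2) :=
              mul_le_mul_of_nonneg_left hw_sum (by linarith)
          _ ≤ ∑ i, (Θ *ᵥ w) i ^ 2 := (hWbound w hwW).1
      have hLtw : ‖L (eL (t - w))‖ ≤ M * ε := hdiff t w ht1 hw_supp hwnet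
      have htri : ‖L (eL w)‖ - ‖L (eL (t - w))‖ ≤ ‖L (eL t)‖ := by
        have hd5 : t - (t - w) = w := by abel
        have heq : L (eL t) - L (eL (t - w)) = L (eL w) := by
          rw [← map_sub, ← map_sub, hd5]
        have h5 := norm_sub_norm_le (L (eL w)) (L (eL t))
        have h6 : L (eL w) - L (eL t) = -(L (eL (t - w))) := by
          rw [← heq]; abel
        rw [h6, norm_neg] at h5
        linarith
      have hlow : c ≤ ‖L (eL t)‖ := by
        have hMε : M * ε ≤ d * ε := mul_le_mul_of_nonneg_right hMd hε0.le
        calc c ≤ a * (1 - ε) - d * ε := hN2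
          _ ≤ ‖L (eL w)‖ - M * ε := by linarith
          _ ≤ ‖L (eL w)‖ - ‖L (eL (t - w))‖ := by linarith
          _ ≤ ‖L (eL t)‖ := htri
      calc (1 - δ) = c ^ 2 := hc2.symm
        _ ≤ ‖L (eL t)‖ ^ 2 := pow_le_pow_left₀ hc0 hlow 2
        _ = ∑ i, (Θ *ᵥ t) i ^ 2 := hLsq t
    · calc (∑ i, (Θ *ᵥ t) i ^ 2) = ‖L (eL t)‖ ^ 2 := (hLsq t).symm
        _ ≤ d ^ 2 := pow_le_pow_left₀ (norm_nonneg _) (hNt.trans hMd) 2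
        _ = 1 + δ := hd2
  -- conclusion by scaling
  intro s hs
  rcases eq_or_lt_of_le (hsum_nonneg s) with h0 | hpos
  · have hs0 : s = 0 := hzero s h0.symm
    subst hs0
    simp
  · set σ : ℝ := Real.sqrt (∑ i, s i ^ 2) with hσdef
    have hσpos : 0 < σ := Real.sqrt_pos.mpr hpos
    have hσ2 : σ ^ 2 = ∑ i, s i ^ 2 := Real.sq_sqrt (hsum_nonneg s)
    set t : Fin n → ℝ := σ⁻¹ • s with htdef
    have ht_supp : ∀ i ∉ T, t i = 0 := by
      intro i hi; simp [htdef, hs i hi]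
    have ht_sum : ∑ i, t i ^ 2 = 1 := hnormalize s hpos
    obtain ⟨hlo, hhi⟩ := hmain t ht_supp ht_sum
    have hseq : s = σ • t := by
      rw [htdef, smul_smul, mul_inv_cancel₀ (ne_of_gt hσpos), one_smul]
    have hΘs : (∑ i, (Θ *ᵥ s) i ^ 2) = σ ^ 2 * (∑ i, (Θ *ᵥ t) i ^ 2) := by
      conv_lhs => rw [hseq]
      rw [Matrix.mulVec_smul]
      simp only [Pi.smul_apply, smul_eq_mul, mul_pow, ← Finset.mul_sum]
    constructor
    · rw [hΘs, ← hσ2]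
      calc (1 - δ) * σ ^ 2 = σ ^ 2 * (1 - δ) := mul_comm _ _
        _ ≤ σ ^ 2 * (∑ i, (Θ *ᵥ t) i ^ 2) :=
            mul_le_mul_of_nonneg_left hlo (sq_nonneg σ)
    · rw [hΘs, ← hσ2]
      calc σ ^ 2 * (∑ i, (Θ *ᵥ t) i ^ 2) ≤ σ ^ 2 * (1 + δ) :=
            mul_le_mul_of_nonneg_left hhi (sq_nonneg σ)
        _ = (1 + δ) * σ ^ 2 := mul_comm _ _
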